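/- Let V be an abelian group with trivial Γ₂-action. For α ∈ Hom(I_Δ, V) let f_α : Δ → V be f_α(c) = α(c − 1) (an element of Ind_{Γ₂}^{Γ₁} V via the identification with functions Δ → V), and let b_α ∈ B¹(Γ₁, Ind_{Γ₂}^{Γ₁} V) be the coboundary b_α(g) = g·f_α − f_α. Then the map sending (φ, α) ∈ Hom(Γ₂^{ab}, V) ⊕ Hom(I_Δ, V) = Hom(𝓔, V) to Φ_φ + b_α is an isomorphism of abelian groups Hom(𝓔, V) → Z¹(Γ₁, Ind_{Γ₂}^{Γ₁} V), and it is Δ-equivariant, where Δ acts on Hom(𝓔, V) by (d∗ψ)(x) = ψ(d^{-1}∗x) and on Z¹(Γ₁, Ind_{Γ₂}^{Γ₁} V) by ((d∗Φ)(g))(c) = Φ(g)(d^{-1}c). -/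

import Mathlib

/-!
STATEMENT 3.  The map (φ, α) ↦ Φ_φ + b_α is a Δ-equivariant isomorphism
Hom(𝓔, V) ≅ Z¹(Γ₁, Ind_{Γ₂}^{Γ₁} V) (trivial Γ₂-action on V, Ind identified
with functions Δ → V, Γ₁ acting by (g·f)(c) = f(c·π g); Δ acting on Hom(𝓔,V)
by (d∗ψ)(x) = ψ(d⁻¹∗x) and on cocycles by ((d∗Φ)(g))(c) = Φ(g)(d⁻¹c)).
-/

open scoped TensorProduct

section EModule

variable {Γ₁ Δ : Type} [Group Γ₁] [Group Δ]

/-- The augmentation map `ℤ[Δ] → ℤ` (sum of coefficients), with `ℤ[Δ]`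
realized as `Δ →₀ ℤ`. -/
noncomputable def augmentation (Δ : Type) : (Δ →₀ ℤ) →+ ℤ :=
  Finsupp.liftAddHom fun _ => AddMonoidHom.id ℤ

/-- The augmentation ideal `I_Δ ⊆ ℤ[Δ]`, as an additive subgroup. -/
noncomputable def augIdeal (Δ : Type) : AddSubgroup (Δ →₀ ℤ) := (augmentation Δ).ker

/-- The element `c − 1` of `I_Δ`. -/
noncomputable def aidElt [Group Δ] (c : Δ) : ↥(augIdeal Δ) :=
  ⟨Finsupp.single c 1 - Finsupp.single 1 1, by
    simp [augIdeal, AddMonoidHom.mem_ker, map_sub, augmentation,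
      Finsupp.liftAddHom_apply_single]⟩

/-- The element `a − b` of `I_Δ`. -/
noncomputable def aidElt2 [Group Δ] (a b : Δ) : ↥(augIdeal Δ) :=
  ⟨Finsupp.single a 1 - Finsupp.single b 1, by
    simp [augIdeal, AddMonoidHom.mem_ker, map_sub, augmentation,
      Finsupp.liftAddHom_apply_single]⟩

/-- The underlying abelian group `Γ₂^{ab} ⊕ I_Δ` of the ℤ[Δ]-module 𝓔
(with `Γ₂ = ker π` and `Γ₂^{ab}` its abelianization, written additively). -/
abbrev EMod (π : Γ₁ →* Δ) : Type :=
  Additive (Abelianization ↥π.ker) × ↥(augIdeal Δ)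

/-- The Δ-action `d·[k] = [σ(d) k σ(d)⁻¹]` on `Γ₂^{ab}` (conjugation uses
normality of `Γ₂ = ker π`). -/
noncomputable def conjAb (π : Γ₁ →* Δ) (σ : Δ → Γ₁) (d : Δ) :
    Abelianization ↥π.ker →* Abelianization ↥π.ker :=
  Abelianization.map (MulAut.conjNormal (σ d)).toMonoidHom

/-- The 2-cocycle `κ(d,c) = [σ(d)σ(c)σ(dc)⁻¹] ∈ Γ₂^{ab}`. -/
noncomputable def kappaE (π : Γ₁ →* Δ) (σ : Δ → Γ₁) (hσ : ∀ c, π (σ c) = c)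
    (d c : Δ) : Abelianization ↥π.ker :=
  Abelianization.of ⟨σ d * σ c * (σ (d * c))⁻¹, by
    have : π (σ d * σ c * (σ (d * c))⁻¹) = 1 := by
      simp only [map_mul, map_inv, hσ, mul_inv_cancel]
    simpa [MonoidHom.mem_ker] using this⟩

/-- The defining formula of the Δ-action on `𝓔 = Γ₂^{ab} ⊕ I_Δ`:
`d ∗ (g, c−1) = (d·g + κ(d,c), dc − d)`, extended ℤ-linearly.  (The elements
`(g, c−1)` generate `𝓔`, so this determines the action.) -/
def EActionFormula (π : Γ₁ →* Δ) (σ : Δ → Γ₁) (hσ : ∀ c, π (σ c) = c)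
    [DistribMulAction Δ (EMod π)] : Prop :=
  ∀ (d : Δ) (g : Abelianization ↥π.ker) (c : Δ),
    d • ((Additive.ofMul g, aidElt c) : EMod π) =
      (Additive.ofMul (conjAb π σ d g * kappaE π σ hσ d c), aidElt2 (d * c) d)

variable (M : Type) [AddCommGroup M] [DistribMulAction Δ M]

/-- `T = 𝓔 ⊗ M`. -/
abbrev TMod (π : Γ₁ →* Δ) : Type := (EMod π) ⊗[ℤ] M

/-- The diagonal action of `d ∈ Δ` on `𝓔 ⊗ M`. -/
noncomputable def diagT (π : Γ₁ →* Δ) [DistribMulAction Δ (EMod π)] (d : Δ) :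
    TMod M π →ₗ[ℤ] TMod M π :=
  TensorProduct.map ((DistribMulAction.toAddMonoidHom (EMod π) d).toIntLinearMap)
    ((DistribMulAction.toAddMonoidHom M d).toIntLinearMap)

/-- The subgroup of `𝓔 ⊗ M` generated by the elements `d•t − t`. -/
noncomputable def coinvKerT (π : Γ₁ →* Δ) [DistribMulAction Δ (EMod π)] :
    AddSubgroup (TMod M π) :=
  AddSubgroup.closure {x | ∃ (d : Δ) (t : TMod M π), x = diagT M π d t - t}

/-- The Δ-coinvariants `(𝓔 ⊗ M)_Δ`. -/
abbrev CoinvT (π : Γ₁ →* Δ) [DistribMulAction Δ (EMod π)] : Type :=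
  TMod M π ⧸ coinvKerT M π

/-- 1-cocycles `Z¹(Γ₁, Hom(M,V))`, where `Γ₁` acts on `Hom(M,V)` by
`(γ·f)(m) = f(π(γ)⁻¹·m)`. -/
noncomputable def ZOneM (π : Γ₁ →* Δ) (V : Type) [AddCommGroup V] :
    AddSubgroup (Γ₁ → (M →+ V)) where
  carrier := {Φ | ∀ (g h : Γ₁) (m : M), Φ (g * h) m = Φ g m + Φ h ((π g)⁻¹ • m)}
  zero_mem' := by intro g h m; simp
  add_mem' := by
    intro Φ Ψ hΦ hΨ g h m
    simp only [Pi.add_apply, AddMonoidHom.add_apply, hΦ g h m, hΨ g h m]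
    abel
  neg_mem' := by
    intro Φ hΦ g h m
    simp only [Pi.neg_apply, AddMonoidHom.neg_apply, hΦ g h m]
    abel

/-- The subgroup `I_Δ·M ⊆ M` generated by the elements `c•m − m`. -/
noncomputable def idealSMulM : AddSubgroup M :=
  AddSubgroup.closure {x : M | ∃ (c : Δ) (m : M), x = c • m - m}

/-- First differential `(Γ₁ →₀ M) → M`, `[g]⊗m ↦ π(g)•m − m`, of the complex
computing `H_1(Γ₁, M)` (with `Γ₁` acting on `M` through `π`). -/
noncomputable def dOne (π : Γ₁ →* Δ) : (Γ₁ →₀ M) →+ M :=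
  Finsupp.liftAddHom fun g =>
    DistribMulAction.toAddMonoidHom M (π g) - AddMonoidHom.id M

/-- Second differential `(Γ₁×Γ₁ →₀ M) → (Γ₁ →₀ M)`,
`[g|h]⊗m ↦ [h]⊗m − [gh]⊗m + [g]⊗(π(h)•m)`. -/
noncomputable def dTwo (π : Γ₁ →* Δ) : ((Γ₁ × Γ₁) →₀ M) →+ (Γ₁ →₀ M) :=
  Finsupp.liftAddHom fun p =>
    (Finsupp.singleAddHom p.2 - Finsupp.singleAddHom (p.1 * p.2)
      + (Finsupp.singleAddHom p.1).comp (DistribMulAction.toAddMonoidHom M (π p.2)) :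
        M →+ (Γ₁ →₀ M))

/-- The group homology `H_1(Γ₁, M)` (action of `Γ₁` on `M` through `π`). -/
abbrev HOne (π : Γ₁ →* Δ) : Type :=
  ↥(dOne M π).ker ⧸ ((dTwo M π).range.addSubgroupOf (dOne M π).ker)

end EModule


section Aux

variable {Γ₁ Δ : Type} [Group Γ₁] [Group Δ]

lemma aug_single (a : Δ) (n : ℤ) : augmentation Δ (Finsupp.single a n) = n := by
  simp [augmentation, Finsupp.liftAddHom_apply_single]

lemma aidElt_one : aidElt (1 : Δ) = 0 := by
  apply Subtype.ext; simp [aidElt]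

lemma aidElt2_self (a : Δ) : aidElt2 a a = 0 := by
  apply Subtype.ext; simp [aidElt2]

lemma abOf_surjective {G : Type} [Group G] :
    Function.Surjective (Abelianization.of : G →* Abelianization G) :=
  QuotientGroup.mk_surjective

/-- A retraction `ℤ[Δ] → I_Δ`, `x ↦ x − aug(x)·[1]`. -/
noncomputable def rmap (Δ : Type) [Group Δ] : (Δ →₀ ℤ) →+ ↥(augIdeal Δ) where
  toFun x := ⟨x - Finsupp.single 1 (augmentation Δ x), by
    simp [augIdeal, AddMonoidHom.mem_ker, map_sub, aug_single]⟩
  map_zero' := by apply Subtype.ext; simp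
  map_add' x y := by
    apply Subtype.ext
    simp only [map_add, Finsupp.single_add, AddSubgroup.coe_add]
    abel

lemma rmap_single (c : Δ) (n : ℤ) : rmap Δ (Finsupp.single c n) = n • aidElt c := by
  apply Subtype.ext
  simp [rmap, aidElt, aug_single, smul_sub, Finsupp.smul_single, smul_eq_mul]

lemma rmap_mem (x : Δ →₀ ℤ) (hx : x ∈ augIdeal Δ) : rmap Δ x = ⟨x, hx⟩ := by
  apply Subtype.ext
  have h0 : augmentation Δ x = 0 := hx
  simp [rmap, h0]

lemma augIdeal_hom_ext {V : Type} [AddCommGroup V] (f g : ↥(augIdeal Δ) →+ V)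
    (h : ∀ c : Δ, f (aidElt c) = g (aidElt c)) : f = g := by
  have key : f.comp (rmap Δ) = g.comp (rmap Δ) := by
    apply Finsupp.addHom_ext
    intro c n
    simp [rmap_single, h c]
  ext x
  obtain ⟨x, hx⟩ := x
  have := DFunLike.congr_fun key x
  simpa [rmap_mem x hx] using this

lemma emod_hom_ext {V : Type} [AddCommGroup V] {π : Γ₁ →* Δ} (f g : EMod π →+ V)
    (h1 : ∀ k : ↥π.ker,
      f (Additive.ofMul (Abelianization.of k), 0) = g (Additive.ofMul (Abelianization.of k), 0))
    (h2 : ∀ c : Δ, f (0, aidElt c) = g (0, aidElt c)) : f = g := by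
  have hsplit : ∀ (F : EMod π →+ V) (a b), F (a, b) = F (a, 0) + F (0, b) := by
    intro F a b
    rw [← map_add]
    congr 1 <;> simp
  have hfst : ∀ a, f (a, 0) = g (a, 0) := by
    intro a
    obtain ⟨k, hk⟩ := abOf_surjective (Additive.toMul a)
    have ha : a = Additive.ofMul (Abelianization.of k) := by
      rw [hk]; rfl
    rw [ha]; exact h1 k
  have hsnd : ∀ b, f ((0 : Additive (Abelianization ↥π.ker)), b) = g (0, b) := by
    intro b
    have := DFunLike.congr_fun
      (augIdeal_hom_ext (V := V)
        (f.comp ((AddMonoidHom.inr (Additive (Abelianization ↥π.ker)) ↥(augIdeal Δ))))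
        (g.comp ((AddMonoidHom.inr (Additive (Abelianization ↥π.ker)) ↥(augIdeal Δ))))
        (by intro c; simpa using h2 c)) b
    simpa using this
  ext ⟨a, b⟩
  rw [hsplit f a b, hsplit g a b, hfst a, hsnd b]

end Aux


section Statement3

variable {Γ₁ Δ : Type} [Group Γ₁] [Group Δ]

/-- The element `σ(c) g σ(c·π g)⁻¹ ∈ Γ₂ = ker π`. -/
def kerElt (π : Γ₁ →* Δ) (σ : Δ → Γ₁) (hσ : ∀ c, π (σ c) = c)
    (g : Γ₁) (c : Δ) : ↥π.ker :=
  ⟨σ c * g * (σ (c * π g))⁻¹, by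
    have : π (σ c * g * (σ (c * π g))⁻¹) = 1 := by
      simp only [map_mul, map_inv, hσ, mul_inv_cancel]
    simpa [MonoidHom.mem_ker] using this⟩

/-- 1-cocycles of `Γ₁` with values in `Ind_{Γ₂}^{Γ₁} V ≅ (Δ → V)` (trivial
action on `V`), for the action `(g·f)(c) = f(c·π g)`. -/
noncomputable def ZOneDfun (π : Γ₁ →* Δ) (V : Type) [AddCommGroup V] :
    AddSubgroup (Γ₁ → (Δ → V)) where
  carrier := {Φ | ∀ (g h : Γ₁) (c : Δ), Φ (g * h) c = Φ g c + Φ h (c * π g)}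
  zero_mem' := by intro g h c; simp
  add_mem' := by
    intro Φ Ψ hΦ hΨ g h c
    simp only [Pi.add_apply, hΦ g h c, hΨ g h c]
    abel
  neg_mem' := by
    intro Φ hΦ g h c
    simp only [Pi.neg_apply, hΦ g h c]
    abel

/-- The map `ψ ↦ Φ_φ + b_α` for `ψ = (φ, α) ∈ Hom(𝓔, V)`:
`g ↦ (c ↦ φ(σ(c) g σ(c·π g)⁻¹) + α((c·π g) − 1) − α(c − 1))`. -/
noncomputable def PsiMap (π : Γ₁ →* Δ) (σ : Δ → Γ₁) (hσ : ∀ c, π (σ c) = c)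
    (V : Type) [AddCommGroup V] (ψ : EMod π →+ V) : Γ₁ → Δ → V :=
  fun g c =>
    ψ (Additive.ofMul (Abelianization.of (kerElt π σ hσ g c)), 0)
      + ψ (0, aidElt (c * π g)) - ψ (0, aidElt c)

section MainAux

variable {Γ₁ Δ : Type} [Group Γ₁] [Group Δ]

lemma of_eq_one {G : Type} [Group G] {H : Subgroup G} (k : ↥H) (hk : (k : G) = 1) :
    Abelianization.of k = 1 := by
  have : k = 1 := Subtype.ext (by simpa using hk)
  rw [this, map_one]

lemma kerElt_mul (π : Γ₁ →* Δ) (σ : Δ → Γ₁) (hσ : ∀ c, π (σ c) = c) (g h : Γ₁) (c : Δ) :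
    kerElt π σ hσ (g * h) c = kerElt π σ hσ g c * kerElt π σ hσ h (c * π g) := by
  apply Subtype.ext
  show σ c * (g * h) * (σ (c * π (g * h)))⁻¹
      = (σ c * g * (σ (c * π g))⁻¹) * (σ (c * π g) * h * (σ (c * π g * π h))⁻¹)
  rw [map_mul, ← mul_assoc c (π g) (π h)]
  group

lemma kerElt_ker (π : Γ₁ →* Δ) (σ : Δ → Γ₁) (hσ : ∀ c, π (σ c) = c) (hσ1 : σ 1 = 1)
    (k : ↥π.ker) : kerElt π σ hσ (↑k) 1 = k := by
  apply Subtype.ext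
  show σ 1 * ↑k * (σ (1 * π ↑k))⁻¹ = ↑k
  rw [MonoidHom.mem_ker.mp k.2, mul_one, hσ1]
  group

lemma kerElt_sigma (π : Γ₁ →* Δ) (σ : Δ → Γ₁) (hσ : ∀ c, π (σ c) = c) (hσ1 : σ 1 = 1)
    (c : Δ) : kerElt π σ hσ (σ c) 1 = 1 := by
  apply Subtype.ext
  show σ 1 * σ c * (σ (1 * π (σ c)))⁻¹ = 1
  rw [hσ, one_mul, hσ1]
  group

end MainAux

theorem statement3 (V : Type) [AddCommGroup V]
    (π : Γ₁ →* Δ) (hπ : Function.Surjective π)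
    (σ : Δ → Γ₁) (hσ : ∀ c, π (σ c) = c) (hσ1 : σ 1 = 1)
    [Fintype Δ]
    [DistribMulAction Δ (EMod π)] (hE : EActionFormula π σ hσ) :
    -- the map lands in Z¹(Γ₁, Ind V) ...
    (∀ ψ : EMod π →+ V, PsiMap π σ hσ V ψ ∈ ZOneDfun π V)
    -- ... is a homomorphism of abelian groups ...
    ∧ (∀ (ψ ψ' : EMod π →+ V) (g : Γ₁) (c : Δ),
        PsiMap π σ hσ V (ψ + ψ') g c = PsiMap π σ hσ V ψ g c + PsiMap π σ hσ V ψ' g c)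
    -- ... is bijective onto Z¹(Γ₁, Ind V) ...
    ∧ Function.Injective (PsiMap π σ hσ V)
    ∧ (∀ Φ : Γ₁ → Δ → V, Φ ∈ ZOneDfun π V → ∃ ψ : EMod π →+ V, PsiMap π σ hσ V ψ = Φ)
    -- ... and is Δ-equivariant: Ψ(d∗ψ) = d∗Ψ(ψ):
    ∧ (∀ (d : Δ) (ψ : EMod π →+ V) (g : Γ₁) (c : Δ),
        PsiMap π σ hσ V (ψ.comp (DistribMulAction.toAddMonoidHom (EMod π) d⁻¹)) g c =
          PsiMap π σ hσ V ψ g (d⁻¹ * c)) := by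
  -- Derived consequences of the action formula
  have kap1 : ∀ d : Δ, kappaE π σ hσ d 1 = 1 := by
    intro d
    exact of_eq_one _ (show σ d * σ 1 * (σ (d * 1))⁻¹ = 1 by rw [hσ1, mul_one, mul_one, mul_inv_cancel])
  have smulL : ∀ (d : Δ) (q : Abelianization ↥π.ker),
      d • ((Additive.ofMul q, 0) : EMod π) = (Additive.ofMul (conjAb π σ d q), 0) := by
    intro d q
    have h := hE d q 1
    rw [aidElt_one] at h
    simp only [kap1 d, mul_one, aidElt2_self] at h
    exact h
  have smulR : ∀ (d c : Δ),
      d • ((0, aidElt c) : EMod π)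
        = (Additive.ofMul (kappaE π σ hσ d c), aidElt2 (d * c) d) := by
    intro d c
    have h := hE d 1 c
    simp only [map_one, one_mul, ofMul_one] at h
    exact h
  refine ⟨?_, ?_, ?_, ?_, ?_⟩
  · -- cocycle condition
    intro ψ g h c
    show PsiMap π σ hσ V ψ (g * h) c
        = PsiMap π σ hσ V ψ g c + PsiMap π σ hσ V ψ h (c * π g)
    unfold PsiMap
    have e1 : ψ (Additive.ofMul (Abelianization.of (kerElt π σ hσ (g * h) c)), 0)
        = ψ (Additive.ofMul (Abelianization.of (kerElt π σ hσ g c)), 0)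
          + ψ (Additive.ofMul (Abelianization.of (kerElt π σ hσ h (c * π g))), 0) := by
      rw [← map_add]
      congr 1
      rw [Prod.mk_add_mk, add_zero, kerElt_mul π σ hσ g h c, map_mul]
      rfl
    have e2 : c * π (g * h) = c * π g * π h := by rw [map_mul, mul_assoc]
    rw [e2, e1]
    abel
  · -- additivity
    intro ψ ψ' g c
    simp only [PsiMap, AddMonoidHom.add_apply]
    abel
  · -- injectivity
    intro ψ ψ' h
    apply emod_hom_ext
    · intro k
      have h1 := congrFun (congrFun h (↑k : Γ₁)) 1
      simp only [PsiMap] at h1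
      rw [kerElt_ker π σ hσ hσ1 k, MonoidHom.mem_ker.mp k.2, mul_one, aidElt_one] at h1
      simpa using h1
    · intro c
      have h2 := congrFun (congrFun h (σ c)) 1
      simp only [PsiMap] at h2
      rw [kerElt_sigma π σ hσ hσ1 c, hσ, one_mul, aidElt_one] at h2
      simpa using h2
  · -- surjectivity
    intro Φ hΦ
    have hc : ∀ (g h : Γ₁) (c : Δ), Φ (g * h) c = Φ g c + Φ h (c * π g) := hΦ
    have hΦ1 : ∀ c : Δ, Φ 1 c = 0 := by
      intro c
      simpa using hc 1 1 c
    let fk : ↥π.ker →* Multiplicative V :=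
      { toFun := fun k => Multiplicative.ofAdd (Φ ↑k 1)
        map_one' := by simpa using hΦ1 1
        map_mul' := by
          intro k k'
          have h2 := hc ↑k ↑k' 1
          rw [MonoidHom.mem_ker.mp k.2, mul_one] at h2
          exact congrArg Multiplicative.ofAdd h2 }
    let ψ : EMod π →+ V :=
      { toFun := fun x => Multiplicative.toAdd (Abelianization.lift fk (Additive.toMul x.1))
          + Finsupp.liftAddHom (fun c => zmultiplesHom V (Φ (σ c) 1)) ↑x.2
        map_zero' := by simp
        map_add' := by
          intro x y
          show Multiplicative.toAdd (Abelianization.lift fk (Additive.toMul (x.1 + y.1)))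
              + Finsupp.liftAddHom (fun c => zmultiplesHom V (Φ (σ c) 1)) ↑(x.2 + y.2) = _
          rw [toMul_add, map_mul, toAdd_mul, AddSubgroup.coe_add, map_add]
          abel }
    refine ⟨ψ, ?_⟩
    funext g c
    have hψ1 : ∀ q : Abelianization ↥π.ker,
        ψ (Additive.ofMul q, 0) = Multiplicative.toAdd (Abelianization.lift fk q) := by
      intro q
      show Multiplicative.toAdd (Abelianization.lift fk (Additive.toMul (Additive.ofMul q)))
          + Finsupp.liftAddHom (fun c => zmultiplesHom V (Φ (σ c) 1)) ↑(0 : ↥(augIdeal Δ)) = _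
      rw [toMul_ofMul, ZeroMemClass.coe_zero, map_zero, add_zero]
    have hψ2 : ∀ c' : Δ, ψ (0, aidElt c') = Φ (σ c') 1 := by
      intro c'
      show Multiplicative.toAdd (Abelianization.lift fk
            (Additive.toMul (0 : Additive (Abelianization ↥π.ker))))
          + Finsupp.liftAddHom (fun c => zmultiplesHom V (Φ (σ c) 1))
              (Finsupp.single c' 1 - Finsupp.single 1 1) = Φ (σ c') 1
      rw [toMul_zero, map_one, toAdd_one, zero_add, map_sub,
        Finsupp.liftAddHom_apply_single, Finsupp.liftAddHom_apply_single]
      simp [zmultiplesHom_apply, hσ1, hΦ1]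
    show PsiMap π σ hσ V ψ g c = Φ g c
    unfold PsiMap
    rw [hψ1, hψ2, hψ2]
    have hlift : Multiplicative.toAdd (Abelianization.lift fk
        (Abelianization.of (kerElt π σ hσ g c))) = Φ ↑(kerElt π σ hσ g c) 1 := by
      rw [Abelianization.lift_apply_of]
      rfl
    rw [hlift]
    have hKs : (↑(kerElt π σ hσ g c) : Γ₁) * σ (c * π g) = σ c * g := by
      show σ c * g * (σ (c * π g))⁻¹ * σ (c * π g) = σ c * g
      group
    have e : Φ ↑(kerElt π σ hσ g c) 1 + Φ (σ (c * π g)) 1 = Φ (σ c) 1 + Φ g c := by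
      have hA := hc ↑(kerElt π σ hσ g c) (σ (c * π g)) 1
      rw [MonoidHom.mem_ker.mp (kerElt π σ hσ g c).2, mul_one, hKs] at hA
      have hB := hc (σ c) g 1
      rw [hσ, one_mul] at hB
      exact hA.symm.trans hB
    rw [e, add_sub_cancel_left]
  · -- equivariance
    intro d ψ g c
    unfold PsiMap
    simp only [AddMonoidHom.coe_comp, Function.comp_apply,
      DistribMulAction.toAddMonoidHom_apply]
    rw [smulL, smulR, smulR]
    have hψ3 : ∀ x y z : EMod π, ψ x + ψ y - ψ z = ψ (x + y - z) := fun x y z => by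
      rw [map_sub, map_add]
    rw [hψ3, hψ3]
    congr 1
    refine Prod.ext ?_ ?_
    · have h2 : ∀ (a b e w : ↥π.ker), (a : Γ₁) * ↑b = ↑e * ↑w →
          Abelianization.of a * Abelianization.of b / Abelianization.of e
            = Abelianization.of w := by
        intro a b e w hw
        have hab : a * b = e * w := Subtype.ext hw
        rw [← map_mul, hab, map_mul, mul_div_cancel_left]
      simp only [Prod.fst_add, Prod.fst_sub, add_zero, sub_zero, zero_add]
      rw [← ofMul_mul, ← ofMul_div]
      congr 1
      have hmap : conjAb π σ d⁻¹ (Abelianization.of (kerElt π σ hσ g c))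
          = Abelianization.of ((MulAut.conjNormal (σ d⁻¹)) (kerElt π σ hσ g c)) :=
        Abelianization.map_of _ _
      rw [hmap]
      unfold kappaE
      refine h2 _ _ _ _ ?_
      rw [MulAut.conjNormal_apply]
      show σ d⁻¹ * (σ c * g * (σ (c * π g))⁻¹) * (σ d⁻¹)⁻¹
            * (σ d⁻¹ * σ (c * π g) * (σ (d⁻¹ * (c * π g)))⁻¹)
          = (σ d⁻¹ * σ c * (σ (d⁻¹ * c))⁻¹)
            * (σ (d⁻¹ * c) * g * (σ (d⁻¹ * c * π g))⁻¹)
      rw [mul_assoc d⁻¹ c (π g)]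
      group
    · apply Subtype.ext
      simp only [Prod.snd_add, Prod.snd_sub, AddSubgroup.coe_add, AddSubgroupClass.coe_sub,
        ZeroMemClass.coe_zero, aidElt, aidElt2]
      rw [mul_assoc d⁻¹ c (π g)]
      abel


end Statement3
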